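/- For a code C in the Hamming space H(n,q) with q>2 that is a λ-fold 1-packing (every word of H(n,q) is within Hamming distance 1 of at most λ codewords, counted with multiplicity), the distance distribution (A_0,...,A_n), where A_i = (1/|C|)·Σ_{x∈C} |{y∈C : d(x,y)=i}|, satisfies n(q-1)A_0 + 2(q-1)A_1 + 2A_2 ≤ (n+1)(q-1)λ − q + 1. -/

import Mathlib

open Finset Function

variable {n q : ℕ}

-- card of a multiset filter as a sum of indicators
lemma mcard_filter_eq_sum {α : Type*} (C : Multiset α) (p : α → Prop) [DecidablePred p] :
    ((C.filter p).card : ℕ) = (C.map (fun y => if p y then 1 else 0)).sum := by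
  induction C using Multiset.induction_on with
  | empty => simp
  | cons a s ih =>
    by_cases h : p a <;> simp [Multiset.filter_cons, h, ih, Nat.add_comm]

-- swap a Finset sum and a Multiset map-sum
lemma swap_sum {α β : Type*} [Fintype β] [DecidableEq β] (C : Multiset α) (f : α → β → ℕ) :
    ∑ v : β, (C.map (fun c => f c v)).sum = (C.map (fun c => ∑ v : β, f c v)).sum := by
  induction C using Multiset.induction_on with
  | empty => simp
  | cons a s ih => simp [Finset.sum_add_distrib, ih]

lemma hd_update_le (x : Fin n → Fin q) (i : Fin n) (a : Fin q) :
    hammingDist (Function.update x i a) x ≤ 1 := by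
  have hsub : ({j | Function.update x i a j ≠ x j} : Finset (Fin n)) ⊆ {i} := by
    intro k hk
    simp only [Finset.mem_filter, Finset.mem_univ, true_and] at hk
    simp only [Finset.mem_singleton]
    by_contra hne
    exact hk (Function.update_of_ne hne a x)
  calc hammingDist (Function.update x i a) x
      = ({j | Function.update x i a j ≠ x j} : Finset (Fin n)).card := rfl
    _ ≤ ({i} : Finset (Fin n)).card := Finset.card_le_card hsub
    _ = 1 := Finset.card_singleton i

lemma dist_one_iff {x v : Fin n → Fin q} :
    hammingDist v x = 1 ↔ ∃ i a, a ≠ x i ∧ v = Function.update x i a := by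
  constructor
  · intro h
    obtain ⟨i, hi⟩ := Finset.card_eq_one.mp h
    have hmem : ∀ k, (v k ≠ x k) ↔ k = i := by
      intro k
      constructor
      · intro hk
        have : k ∈ ({j | v j ≠ x j} : Finset (Fin n)) := by simpa using hk
        rw [hi] at this; simpa using this
      · intro hk
        subst hk
        have : k ∈ ({j | v j ≠ x j} : Finset (Fin n)) := by rw [hi]; simp
        simpa using this
    refine ⟨i, v i, (hmem i).mpr rfl, ?_⟩
    funext k
    by_cases hk : k = i
    · subst hk; simp
    · rw [Function.update_of_ne hk]
      by_contra hne
      exact hk ((hmem k).mp hne)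
  · rintro ⟨i, a, ha, rfl⟩
    have : ({j | Function.update x i a j ≠ x j} : Finset (Fin n)) = {i} := by
      ext k
      simp only [Finset.mem_filter, Finset.mem_univ, true_and, Finset.mem_singleton]
      by_cases hk : k = i
      · subst hk; simpa using ha
      · simp [Function.update_of_ne hk, hk]
    show ({j | Function.update x i a j ≠ x j} : Finset (Fin n)).card = 1
    rw [this]; exact Finset.card_singleton i

lemma ball_card (hq0 : 0 < q) (x : Fin n → Fin q) :
    ({v : Fin n → Fin q | hammingDist v x ≤ 1} : Finset (Fin n → Fin q)).card
      = 1 + n * (q - 1) := by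
  have hsplit : ({v : Fin n → Fin q | hammingDist v x ≤ 1} : Finset (Fin n → Fin q))
      = ({v | hammingDist v x = 0} : Finset (Fin n → Fin q))
        ∪ ({v | hammingDist v x = 1} : Finset (Fin n → Fin q)) := by
    ext v; simp [Nat.le_one_iff_eq_zero_or_eq_one]
  have hdisj : Disjoint ({v : Fin n → Fin q | hammingDist v x = 0} : Finset (Fin n → Fin q))
      ({v | hammingDist v x = 1} : Finset (Fin n → Fin q)) := by
    rw [Finset.disjoint_left]
    intro v h0 h1
    simp only [Finset.mem_filter] at h0 h1
    omega
  have h0 : ({v : Fin n → Fin q | hammingDist v x = 0} : Finset (Fin n → Fin q)) = {x} := by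
    ext v; simp [hammingDist_eq_zero]
  have h1 : ({v : Fin n → Fin q | hammingDist v x = 1} : Finset (Fin n → Fin q))
      = Finset.univ.biUnion (fun i : Fin n =>
          (Finset.univ.filter (· ≠ x i)).image (fun a => Function.update x i a)) := by
    ext v
    simp only [Finset.mem_filter, Finset.mem_univ, true_and, Finset.mem_biUnion,
      Finset.mem_image]
    rw [dist_one_iff]
    constructor
    · rintro ⟨i, a, ha, rfl⟩; exact ⟨i, a, by simpa using ha, rfl⟩
    · rintro ⟨i, a, ha, rfl⟩; exact ⟨i, a, by simpa using ha, rfl⟩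
  have hcard1 : ({v : Fin n → Fin q | hammingDist v x = 1} : Finset (Fin n → Fin q)).card
      = n * (q - 1) := by
    rw [h1, Finset.card_biUnion]
    · have : ∀ i : Fin n,
          ((Finset.univ.filter (· ≠ x i)).image (fun a => Function.update x i a)).card
            = q - 1 := by
        intro i
        rw [Finset.card_image_of_injective _ (fun a b hab => by
          have := congrFun hab i; simpa using this)]
        rw [Finset.filter_ne', Finset.card_erase_of_mem (Finset.mem_univ _)]
        simp
      simp [this, Finset.sum_const, Finset.card_univ]
    · intro i _ j _ hij
      rw [Function.onFun, Finset.disjoint_left]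
      rintro v hv hv'
      simp only [Finset.mem_image, Finset.mem_filter, Finset.mem_univ, true_and] at hv hv'
      obtain ⟨a, ha, rfl⟩ := hv
      obtain ⟨b, hb, hab⟩ := hv'
      have h1 := congrFun hab i
      rw [Function.update_of_ne hij, Function.update_self] at h1
      exact ha h1.symm
  rw [hsplit, Finset.card_union_of_disjoint hdisj, h0, hcard1, Finset.card_singleton]

-- intersection-count lower bound
noncomputable def Nw (n q : ℕ) : ℕ → ℕ := fun d =>
  if d = 0 then 1 + n * (q - 1) else if d = 1 then q else if d = 2 then 2 else 0

lemma inter_lb (hq0 : 0 < q) (x y : Fin n → Fin q) :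
    Nw n q (hammingDist x y) ≤
      ({v : Fin n → Fin q | hammingDist v x ≤ 1 ∧ hammingDist v y ≤ 1} :
        Finset (Fin n → Fin q)).card := by
  rcases h0 : hammingDist x y with _ | _ | _ | d
  · -- d = 0 : x = y
    have hxy : x = y := eq_of_hammingDist_eq_zero h0
    subst hxy
    have : ({v : Fin n → Fin q | hammingDist v x ≤ 1 ∧ hammingDist v x ≤ 1} :
        Finset (Fin n → Fin q)) = ({v | hammingDist v x ≤ 1} : Finset (Fin n → Fin q)) := by
      ext v; simp
    rw [this, ball_card hq0]
    simp [Nw]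
  · -- d = 1
    have h1 : hammingDist y x = 1 := by rw [hammingDist_comm]; exact h0
    obtain ⟨i, a, ha, rfl⟩ := dist_one_iff.mp h1
    have hsub : (Finset.univ.image (fun b => Function.update x i b) : Finset (Fin n → Fin q))
        ⊆ ({v | hammingDist v x ≤ 1 ∧ hammingDist v (Function.update x i a) ≤ 1} :
            Finset (Fin n → Fin q)) := by
      intro v hv
      simp only [Finset.mem_image, Finset.mem_univ, true_and] at hv
      obtain ⟨b, rfl⟩ := hv
      simp only [Finset.mem_filter, Finset.mem_univ, true_and]
      refine ⟨hd_update_le x i b, ?_⟩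
      have : Function.update x i b = Function.update (Function.update x i a) i b := by
        rw [Function.update_idem]
      rw [this]
      exact hd_update_le _ i b
    have hcard : (Finset.univ.image (fun b => Function.update x i b) :
        Finset (Fin n → Fin q)).card = q := by
      rw [Finset.card_image_of_injective _ (fun a b hab => by
        have := congrFun hab i; simpa using this)]
      simp
    calc Nw n q 1 = q := by simp [Nw]
      _ = _ := hcard.symm
      _ ≤ _ := Finset.card_le_card hsub
  · -- d = 2
    have h2 : ({k | x k ≠ y k} : Finset (Fin n)).card = 2 := h0
    obtain ⟨i, j, hij, hset⟩ := Finset.card_eq_two.mp h2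
    have hiy : x i ≠ y i := by
      have : i ∈ ({k | x k ≠ y k} : Finset (Fin n)) := by rw [hset]; simp
      simpa using this
    have hjy : x j ≠ y j := by
      have : j ∈ ({k | x k ≠ y k} : Finset (Fin n)) := by rw [hset]; simp
      simpa using this
    have hnot : ∀ k, x k ≠ y k → k = i ∨ k = j := by
      intro k hk
      have : k ∈ ({k | x k ≠ y k} : Finset (Fin n)) := by simpa using hk
      rw [hset] at this; simpa using this
    set u1 := Function.update x i (y i) with hu1
    set u2 := Function.update x j (y j) with hu2
    have hdy : ∀ (k : Fin n) (c : Fin q), (∀ m, x m ≠ y m → m = k ∨ m = c.1 ∨ True) → True :=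
      fun _ _ _ => trivial
    have hu1y : hammingDist u1 y ≤ 1 := by
      have hsub : ({m | u1 m ≠ y m} : Finset (Fin n)) ⊆ {j} := by
        intro k hk
        simp only [Finset.mem_filter, Finset.mem_univ, true_and] at hk
        simp only [Finset.mem_singleton]
        by_cases hki : k = i
        · subst hki; rw [hu1, Function.update_self] at hk; exact absurd rfl hk
        · rw [hu1, Function.update_of_ne hki] at hk
          rcases hnot k hk with h | h
          · exact absurd h hki
          · exact h
      calc hammingDist u1 y = ({m | u1 m ≠ y m} : Finset (Fin n)).card := rfl
        _ ≤ ({j} : Finset (Fin n)).card := Finset.card_le_card hsub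
        _ = 1 := Finset.card_singleton j
    have hu2y : hammingDist u2 y ≤ 1 := by
      have hsub : ({m | u2 m ≠ y m} : Finset (Fin n)) ⊆ {i} := by
        intro k hk
        simp only [Finset.mem_filter, Finset.mem_univ, true_and] at hk
        simp only [Finset.mem_singleton]
        by_cases hkj : k = j
        · subst hkj; rw [hu2, Function.update_self] at hk; exact absurd rfl hk
        · rw [hu2, Function.update_of_ne hkj] at hk
          rcases hnot k hk with h | h
          · exact h
          · exact absurd h hkj
      calc hammingDist u2 y = ({m | u2 m ≠ y m} : Finset (Fin n)).card := rfl
        _ ≤ ({i} : Finset (Fin n)).card := Finset.card_le_card hsub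
        _ = 1 := Finset.card_singleton i
    have hne : u1 ≠ u2 := by
      intro h
      have := congrFun h i
      rw [hu1, hu2, Function.update_self, Function.update_of_ne hij] at this
      exact hiy this.symm
    have hsub : ({u1, u2} : Finset (Fin n → Fin q)) ⊆
        ({v | hammingDist v x ≤ 1 ∧ hammingDist v y ≤ 1} : Finset (Fin n → Fin q)) := by
      intro v hv
      simp only [Finset.mem_insert, Finset.mem_singleton] at hv
      simp only [Finset.mem_filter, Finset.mem_univ, true_and]
      rcases hv with rfl | rfl
      · exact ⟨hd_update_le x i (y i), hu1y⟩
      · exact ⟨hd_update_le x j (y j), hu2y⟩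
    calc Nw n q 2 = 2 := by simp [Nw]
      _ = ({u1, u2} : Finset (Fin n → Fin q)).card := (Finset.card_pair hne).symm
      _ ≤ _ := Finset.card_le_card hsub
  · simp [Nw]

lemma cast_msum {α : Type*} (C : Multiset α) (f : α → ℕ) :
    (C.map (fun x => (f x : ℚ))).sum = ((C.map f).sum : ℚ) := by
  induction C using Multiset.induction_on with
  | empty => simp
  | cons a s ih =>
    simp only [Multiset.map_cons, Multiset.sum_cons, ih, Nat.cast_add]

-- per-x bound from the packing condition
lemma perx (hq0 : 0 < q) (C : Multiset (Fin n → Fin q)) (lam : ℕ)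
    (hpack : ∀ v : Fin n → Fin q,
      (C.filter (fun c => hammingDist v c ≤ 1)).card ≤ lam)
    (x : Fin n → Fin q) :
    (C.map (fun y => Nw n q (hammingDist x y))).sum ≤ (1 + n * (q - 1)) * lam := by
  calc (C.map (fun y => Nw n q (hammingDist x y))).sum
      ≤ (C.map (fun y =>
          ({v : Fin n → Fin q | hammingDist v x ≤ 1 ∧ hammingDist v y ≤ 1} :
            Finset (Fin n → Fin q)).card)).sum :=
        Multiset.sum_map_le_sum_map _ _ (fun y _ => inter_lb hq0 x y)
    _ = (C.map (fun y => ∑ v : Fin n → Fin q,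
          if hammingDist v x ≤ 1 ∧ hammingDist v y ≤ 1 then 1 else 0)).sum := by
        congr 1
        apply Multiset.map_congr rfl
        intro y _
        rw [Finset.card_filter]
    _ = ∑ v : Fin n → Fin q, (C.map (fun y =>
          if hammingDist v x ≤ 1 ∧ hammingDist v y ≤ 1 then 1 else 0)).sum :=
        (swap_sum C _).symm
    _ ≤ ∑ v : Fin n → Fin q, (if hammingDist v x ≤ 1 then lam else 0) := by
        apply Finset.sum_le_sum
        intro v _
        by_cases hv : hammingDist v x ≤ 1
        · rw [if_pos hv]
          have : (C.map (fun y =>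
              if hammingDist v x ≤ 1 ∧ hammingDist v y ≤ 1 then 1 else 0)).sum
              = (C.filter (fun y => hammingDist v y ≤ 1)).card := by
            rw [mcard_filter_eq_sum]
            apply congrArg
            apply Multiset.map_congr rfl
            intro y _
            simp [hv]
          rw [this]
          exact hpack v
        · rw [if_neg hv]
          have : (C.map (fun y =>
              if hammingDist v x ≤ 1 ∧ hammingDist v y ≤ 1 then 1 else 0)).sum
              = (C.map (fun _ => 0)).sum := by
            apply congrArg
            apply Multiset.map_congr rfl
            intro y _
            simp [hv]
          rw [this]
          simp
    _ = (1 + n * (q - 1)) * lam := by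
        rw [Finset.sum_ite, Finset.sum_const, Finset.sum_const_zero, add_zero,
          smul_eq_mul]
        congr 1
        exact ball_card hq0 x

lemma Nw_eq (x y : Fin n → Fin q) :
    Nw n q (hammingDist x y)
      = (1 + n * (q - 1)) * (if hammingDist x y = 0 then 1 else 0)
        + q * (if hammingDist x y = 1 then 1 else 0)
        + 2 * (if hammingDist x y = 2 then 1 else 0) := by
  generalize hammingDist x y = d
  rcases d with _ | _ | _ | d <;> simp [Nw]

/-- Lemma: λ-fold 1-packing distance distribution bound (odd case). -/
theorem stmt_0 (q n lam : ℕ) (hq : 2 < q)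
    (C : Multiset (Fin n → Fin q)) (hC : C ≠ 0)
    (hpack : ∀ v : Fin n → Fin q,
      (C.filter (fun c => hammingDist v c ≤ 1)).card ≤ lam)
    (A : ℕ → ℚ)
    (hA : ∀ i, A i = (Multiset.card C : ℚ)⁻¹ *
      ((C.map (fun x => ((C.filter (fun y => hammingDist x y = i)).card : ℚ))).sum)) :
    (n : ℚ) * (q - 1) * A 0 + 2 * (q - 1) * A 1 + 2 * A 2
      ≤ (n + 1) * (q - 1) * lam - q + 1 := by
  have hq0 : 0 < q := by omega
  have hMpos : 0 < Multiset.card C := Multiset.card_pos.mpr hC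
  set M := Multiset.card C with hMdef
  let c0 : (Fin n → Fin q) → ℕ := fun x => (C.filter (fun y => hammingDist x y = 0)).card
  let c1 : (Fin n → Fin q) → ℕ := fun x => (C.filter (fun y => hammingDist x y = 1)).card
  let c2 : (Fin n → Fin q) → ℕ := fun x => (C.filter (fun y => hammingDist x y = 2)).card
  set S0 := (C.map c0).sum with hS0
  set S1 := (C.map c1).sum with hS1
  set S2 := (C.map c2).sum with hS2
  -- F1
  have hF1 : (1 + n * (q - 1)) * S0 + q * S1 + 2 * S2 ≤ M * ((1 + n * (q - 1)) * lam) := by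
    have key : ∀ x ∈ C, (1 + n * (q - 1)) * c0 x + q * c1 x + 2 * c2 x
        ≤ (1 + n * (q - 1)) * lam := by
      intro x _
      have hx := perx hq0 C lam hpack x
      have e : (C.map (fun y => Nw n q (hammingDist x y))).sum
          = (1 + n * (q - 1)) * c0 x + q * c1 x + 2 * c2 x := by
        rw [Multiset.map_congr rfl (fun y _ => Nw_eq x y)]
        rw [Multiset.sum_map_add, Multiset.sum_map_add, Multiset.sum_map_mul_left,
          Multiset.sum_map_mul_left, Multiset.sum_map_mul_left]
        rw [show c0 x = (C.map (fun y => if hammingDist x y = 0 then 1 else 0)).sum from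
          mcard_filter_eq_sum C _]
        rw [show c1 x = (C.map (fun y => if hammingDist x y = 1 then 1 else 0)).sum from
          mcard_filter_eq_sum C _]
        rw [show c2 x = (C.map (fun y => if hammingDist x y = 2 then 1 else 0)).sum from
          mcard_filter_eq_sum C _]
      exact e ▸ hx
    calc (1 + n * (q - 1)) * S0 + q * S1 + 2 * S2
        = (C.map (fun x => (1 + n * (q - 1)) * c0 x + q * c1 x + 2 * c2 x)).sum := by
          rw [Multiset.sum_map_add, Multiset.sum_map_add, Multiset.sum_map_mul_left,
            Multiset.sum_map_mul_left, Multiset.sum_map_mul_left, hS0, hS1, hS2]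
      _ ≤ (C.map (fun _ => (1 + n * (q - 1)) * lam)).sum :=
          Multiset.sum_map_le_sum_map _ _ key
      _ = M * ((1 + n * (q - 1)) * lam) := by
          simp [Multiset.map_const', Multiset.sum_replicate, hMdef]
  -- F2
  have hF2 : S0 + S1 ≤ M * lam := by
    have key : ∀ x ∈ C, c0 x + c1 x ≤ lam := by
      intro x _
      have e : c0 x + c1 x = (C.filter (fun y => hammingDist x y ≤ 1)).card := by
        show (C.filter (fun y => hammingDist x y = 0)).card
            + (C.filter (fun y => hammingDist x y = 1)).card = _
        rw [← Multiset.card_add, Multiset.filter_add_filter]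
        have hz : C.filter (fun y => hammingDist x y = 0 ∧ hammingDist x y = 1) = 0 :=
          Multiset.filter_eq_nil.mpr (fun y _ h => by omega)
        rw [hz, add_zero]
        congr 1
        exact Multiset.filter_congr (fun y _ => by omega)
      rw [e]
      exact hpack x
    calc S0 + S1 = (C.map (fun x => c0 x + c1 x)).sum := by
          rw [Multiset.sum_map_add, hS0, hS1]
      _ ≤ (C.map (fun _ => lam)).sum := Multiset.sum_map_le_sum_map _ _ key
      _ = M * lam := by simp [Multiset.map_const', Multiset.sum_replicate, hMdef]
  -- F3
  have hF3 : M ≤ S0 := by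
    have hterm : ∀ t ∈ C.map c0, 1 ≤ t := by
      intro t ht
      obtain ⟨x, hx, rfl⟩ := Multiset.mem_map.mp ht
      have hmem : x ∈ C.filter (fun y => hammingDist x y = 0) :=
        Multiset.mem_filter.mpr ⟨hx, hammingDist_self x⟩
      have := Multiset.card_pos_iff_exists_mem.mpr ⟨x, hmem⟩
      exact this
    have h := Multiset.card_nsmul_le_sum hterm
    simpa [hMdef] using h
  -- pass to ℚ
  have hq1 : 1 ≤ q := by omega
  have h1Q : (((1 + n * (q - 1)) * S0 + q * S1 + 2 * S2 : ℕ) : ℚ)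
      ≤ ((M * ((1 + n * (q - 1)) * lam) : ℕ) : ℚ) := Nat.cast_le.mpr hF1
  have h2Q : ((S0 + S1 : ℕ) : ℚ) ≤ ((M * lam : ℕ) : ℚ) := Nat.cast_le.mpr hF2
  have h3Q : ((M : ℕ) : ℚ) ≤ ((S0 : ℕ) : ℚ) := Nat.cast_le.mpr hF3
  push_cast [Nat.cast_sub hq1] at h1Q h2Q h3Q
  have hq2 : (0 : ℚ) ≤ (q : ℚ) - 2 := by
    have : (3 : ℚ) ≤ (q : ℚ) := by exact_mod_cast hq
    linarith
  have hq1' : (0 : ℚ) ≤ (q : ℚ) - 1 := by linarith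
  have p2 := mul_le_mul_of_nonneg_left h2Q hq2
  have p3 := mul_le_mul_of_nonneg_left h3Q hq1'
  have hMQ : (0 : ℚ) < (M : ℚ) := by exact_mod_cast hMpos
  have key : (n : ℚ) * ((q : ℚ) - 1) * (S0 : ℚ) + 2 * ((q : ℚ) - 1) * (S1 : ℚ)
      + 2 * (S2 : ℚ)
      ≤ (M : ℚ) * (((n : ℚ) + 1) * ((q : ℚ) - 1) * (lam : ℚ) - (q : ℚ) + 1) := by
    nlinarith [h1Q, p2, p3]
  have e0 : (C.map (fun x => ((C.filter (fun y => hammingDist x y = 0)).card : ℚ))).sum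
      = (S0 : ℚ) := cast_msum C _
  have e1 : (C.map (fun x => ((C.filter (fun y => hammingDist x y = 1)).card : ℚ))).sum
      = (S1 : ℚ) := cast_msum C _
  have e2 : (C.map (fun x => ((C.filter (fun y => hammingDist x y = 2)).card : ℚ))).sum
      = (S2 : ℚ) := cast_msum C _
  rw [hA 0, hA 1, hA 2, e0, e1, e2]
  have lhs_eq : (n : ℚ) * ((q : ℚ) - 1) * ((M : ℚ)⁻¹ * (S0 : ℚ))
      + 2 * ((q : ℚ) - 1) * ((M : ℚ)⁻¹ * (S1 : ℚ)) + 2 * ((M : ℚ)⁻¹ * (S2 : ℚ))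
      = (M : ℚ)⁻¹ * ((n : ℚ) * ((q : ℚ) - 1) * (S0 : ℚ)
        + 2 * ((q : ℚ) - 1) * (S1 : ℚ) + 2 * (S2 : ℚ)) := by ring
  rw [lhs_eq]
  calc (M : ℚ)⁻¹ * ((n : ℚ) * ((q : ℚ) - 1) * (S0 : ℚ)
        + 2 * ((q : ℚ) - 1) * (S1 : ℚ) + 2 * (S2 : ℚ))
      ≤ (M : ℚ)⁻¹ * ((M : ℚ) * (((n : ℚ) + 1) * ((q : ℚ) - 1) * (lam : ℚ) - (q : ℚ) + 1)) :=
        mul_le_mul_of_nonneg_left key (inv_pos.mpr hMQ).le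
    _ = ((n : ℚ) + 1) * ((q : ℚ) - 1) * (lam : ℚ) - (q : ℚ) + 1 := by
        field_simp
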